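/- For integers r ≥ 2 and p, q ≥ 1, ∑_{l,m,n≥1} 1/((l+m+n)^r l^p m^q) = ∑_{τ=0}^{q-1} C(p-1+τ, τ) ζ(r, p+τ, q-τ) + ∑_{τ=0}^{p-1} C(q-1+τ, τ) ζ(r, q+τ, p-τ). -/

import Mathlib

/-- The triple zeta value `ζ(k₁, k₂, k₃) = ∑_{m₁ > m₂ > m₃ > 0} m₁^{-k₁} m₂^{-k₂} m₃^{-k₃}`,
parametrized by `m₃ = c + 1`, `m₂ = b + c + 2`, `m₁ = a + b + c + 3`. -/
noncomputable def zeta3 (k₁ k₂ k₃ : ℕ) : ℝ :=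
  ∑' (a : ℕ) (b : ℕ) (c : ℕ),
    1 / (((a : ℝ) + (b : ℝ) + (c : ℝ) + 3) ^ k₁ *
         ((b : ℝ) + (c : ℝ) + 2) ^ k₂ * ((c : ℝ) + 1) ^ k₃)

open Finset

lemma pascal_sum (t : ℕ → ℝ) (a q : ℕ) :
    ∑ τ ∈ range (q+1), (Nat.choose (a+1+τ) τ : ℝ) * t τ
      = ∑ τ ∈ range (q+1), (Nat.choose (a+τ) τ : ℝ) * t τ
        + ∑ τ ∈ range q, (Nat.choose (a+1+τ) τ : ℝ) * t (τ+1) := by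
  rw [Finset.sum_range_succ' (fun τ => (Nat.choose (a+1+τ) τ : ℝ) * t τ) q,
      Finset.sum_range_succ' (fun τ => (Nat.choose (a+τ) τ : ℝ) * t τ) q]
  have step : ∀ i ∈ range q, (Nat.choose (a+1+(i+1)) (i+1) : ℝ) * t (i+1)
      = (Nat.choose (a+(i+1)) (i+1) : ℝ) * t (i+1) + (Nat.choose (a+1+i) i : ℝ) * t (i+1) := by
    intro i _
    have h : a+1+(i+1) = (a+1+i) + 1 := by ring
    have h2 : a + (i+1) = a + 1 + i := by ring
    rw [h, Nat.choose_succ_succ (a+1+i) i, h2]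
    push_cast
    ring
  rw [Finset.sum_congr rfl step, Finset.sum_add_distrib]
  simp [Nat.choose]
  ring

lemma euler_aux0 (x y : ℝ) (hx : 0 < x) (hy : 0 < y) (b : ℕ) :
    1/(x * y^(b+1)) = (∑ τ ∈ range (b+1), 1/((x+y)^(1+τ) * y^(b+1-τ)))
      + 1/((x+y)^(b+1) * x) := by
  induction b with
  | zero =>
    have hxy : (0:ℝ) < x + y := by linarith
    rw [Finset.sum_range_one]
    norm_num
    field_simp
  | succ b ih =>
    have hxy : (0:ℝ) < x + y := by linarith
    have key : 1/(x * y^(b+2)) = 1/((x+y) * y^(b+2)) + (1/(x+y)) * (1/(x * y^(b+1))) := by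
      field_simp
      ring
    rw [key, ih, mul_add, Finset.mul_sum]
    rw [Finset.sum_range_succ' (fun τ => 1/((x+y)^(1+τ) * y^(b+2-τ))) (b+1)]
    have e1 : ∀ τ ∈ range (b+1),
        (1/(x+y)) * (1/((x+y)^(1+τ) * y^(b+1-τ))) = 1/((x+y)^(1+(τ+1)) * y^(b+2-(τ+1))) := by
      intro τ hτ
      have h0 : b + 2 - (τ+1) = b + 1 - τ := by omega
      have h1 : (x+y)^(1+(τ+1)) = (x+y)^(1+τ) * (x+y) := by
        rw [show 1+(τ+1) = (1+τ)+1 from by ring, pow_succ]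
      rw [h0, h1]
      have hp : (0:ℝ) < (x+y)^(1+τ) := pow_pos hxy _
      have hyp : (0:ℝ) < y^(b+1-τ) := pow_pos hy _
      field_simp
    rw [Finset.sum_congr rfl e1]
    have e2 : (1/(x+y)) * (1/((x+y)^(b+1) * x)) = 1/((x+y)^(b+1+1) * x) := by
      rw [pow_succ]
      have hp : (0:ℝ) < (x+y)^(b+1) := pow_pos hxy _
      field_simp
      ring
    rw [e2]
    simp
    ring

lemma key_rec (x y : ℝ) (hx : 0 < x) (hy : 0 < y) (a b : ℕ) :
    1/(x^(a+1) * y^(b+1)) = (1/(x+y)) * (1/(x^a * y^(b+1)) + 1/(x^(a+1) * y^b)) := by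
  have hxy : (0:ℝ) < x + y := by linarith
  rw [pow_succ x a, pow_succ y b]
  have h1 : (0:ℝ) < x^a := pow_pos hx _
  have h2 : (0:ℝ) < y^b := pow_pos hy _
  field_simp

lemma euler_real (n : ℕ) : ∀ p q : ℕ, p + q = n → ∀ x y : ℝ, 0 < x → 0 < y →
    1/(x^(p+1) * y^(q+1)) =
      (∑ τ ∈ range (q+1), (Nat.choose (p+τ) τ : ℝ) / ((x+y)^(p+1+τ) * y^(q+1-τ)))
    + (∑ τ ∈ range (p+1), (Nat.choose (q+τ) τ : ℝ) / ((x+y)^(q+1+τ) * x^(p+1-τ))) := by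
  induction n with
  | zero =>
    intro p q hpq x y hx hy
    have hp : p = 0 := by omega
    have hq : q = 0 := by omega
    subst hp; subst hq
    have hxy : (0:ℝ) < x + y := by linarith
    simp only [Nat.zero_add, Nat.choose_self, Nat.cast_one, Finset.sum_range_one, pow_one,
      Nat.add_zero, Nat.choose_zero_right, Nat.sub_zero]
    field_simp
  | succ n ih =>
    intro p q hpq x y hx hy
    have hxy : (0:ℝ) < x + y := by linarith
    rcases Nat.eq_zero_or_pos p with hp0 | hp0
    · subst hp0
      simp only [Nat.zero_add, Nat.choose_self, Nat.cast_one, Finset.sum_range_one, pow_one,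
        Nat.add_zero, Nat.choose_zero_right, Nat.sub_zero]
      exact euler_aux0 x y hx hy q
    rcases Nat.eq_zero_or_pos q with hq0 | hq0
    · subst hq0
      simp only [Nat.zero_add, Nat.choose_self, Nat.cast_one, Finset.sum_range_one, pow_one,
        Nat.add_zero, Nat.choose_zero_right, Nat.sub_zero]
      have h := euler_aux0 y x hy hx p
      rw [show y + x = x + y from by ring] at h
      rw [show x^(p+1) * y = y * x^(p+1) from mul_comm _ _, h, add_comm]
    obtain ⟨p', rfl⟩ : ∃ p', p = p' + 1 := ⟨p - 1, by omega⟩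
    obtain ⟨q', rfl⟩ : ∃ q', q = q' + 1 := ⟨q - 1, by omega⟩
    have ih1 := ih p' (q'+1) (by omega) x y hx hy
    have ih2 := ih (p'+1) q' (by omega) x y hx hy
    rw [key_rec x y hx hy (p'+1) (q'+1), ih1, ih2]
    set z := x + y with hz
    -- target term functions
    set t : ℕ → ℝ := fun τ => 1/(z^(p'+1+1+τ) * y^(q'+1+1-τ)) with ht
    set s : ℕ → ℝ := fun τ => 1/(z^(q'+1+1+τ) * x^(p'+1+1-τ)) with hs
    have hzpow : ∀ k : ℕ, (0:ℝ) < z^k := fun k => pow_pos hxy k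
    have E1 : ∀ τ ∈ range (q'+1+1), (1/z) * ((Nat.choose (p'+τ) τ : ℝ) / (z^(p'+1+τ) * y^(q'+1+1-τ)))
        = (Nat.choose (p'+τ) τ : ℝ) * t τ := by
      intro τ _
      have he : z^(p'+1+1+τ) = z^(p'+1+τ) * z := by
        rw [show p'+1+1+τ = (p'+1+τ)+1 from by ring, pow_succ]
      simp only [ht]
      rw [he]
      have := hzpow (p'+1+τ)
      have := pow_pos hy (q'+1+1-τ)
      field_simp
      try ring
      try tauto
    have E3 : ∀ τ ∈ range (q'+1), (1/z) * ((Nat.choose (p'+1+τ) τ : ℝ) / (z^(p'+1+1+τ) * y^(q'+1-τ)))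
        = (Nat.choose (p'+1+τ) τ : ℝ) * t (τ+1) := by
      intro τ hτ
      have hsub : q'+1+1-(τ+1) = q'+1-τ := by omega
      have he : z^(p'+1+1+(τ+1)) = z^(p'+1+1+τ) * z := by
        rw [show p'+1+1+(τ+1) = (p'+1+1+τ)+1 from by ring, pow_succ]
      simp only [ht]
      rw [hsub, he]
      have := hzpow (p'+1+1+τ)
      have := pow_pos hy (q'+1-τ)
      field_simp
      try ring
      try tauto
    have E2 : ∀ τ ∈ range (p'+1), (1/z) * ((Nat.choose (q'+1+τ) τ : ℝ) / (z^(q'+1+1+τ) * x^(p'+1-τ)))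
        = (Nat.choose (q'+1+τ) τ : ℝ) * s (τ+1) := by
      intro τ hτ
      have hsub : p'+1+1-(τ+1) = p'+1-τ := by omega
      have he : z^(q'+1+1+(τ+1)) = z^(q'+1+1+τ) * z := by
        rw [show q'+1+1+(τ+1) = (q'+1+1+τ)+1 from by ring, pow_succ]
      simp only [hs]
      rw [hsub, he]
      have := hzpow (q'+1+1+τ)
      have := pow_pos hx (p'+1-τ)
      field_simp
      try ring
      try tauto
    have E4 : ∀ τ ∈ range (p'+1+1), (1/z) * ((Nat.choose (q'+τ) τ : ℝ) / (z^(q'+1+τ) * x^(p'+1+1-τ)))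
        = (Nat.choose (q'+τ) τ : ℝ) * s τ := by
      intro τ _
      have he : z^(q'+1+1+τ) = z^(q'+1+τ) * z := by
        rw [show q'+1+1+τ = (q'+1+τ)+1 from by ring, pow_succ]
      simp only [hs]
      rw [he]
      have := hzpow (q'+1+τ)
      have := pow_pos hx (p'+1+1-τ)
      field_simp
      try ring
      try tauto
    have Yt : (∑ τ ∈ range (q'+1+1), (Nat.choose (p'+1+τ) τ : ℝ) / (z^(p'+1+1+τ) * y^(q'+1+1-τ)))
        = ∑ τ ∈ range (q'+1+1), (Nat.choose (p'+1+τ) τ : ℝ) * t τ := by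
      exact Finset.sum_congr rfl (fun τ _ => by simp only [ht]; rw [div_eq_mul_one_div])
    have Xt : (∑ τ ∈ range (p'+1+1), (Nat.choose (q'+1+τ) τ : ℝ) / (z^(q'+1+1+τ) * x^(p'+1+1-τ)))
        = ∑ τ ∈ range (p'+1+1), (Nat.choose (q'+1+τ) τ : ℝ) * s τ := by
      exact Finset.sum_congr rfl (fun τ _ => by simp only [hs]; rw [div_eq_mul_one_div])
    rw [Yt, Xt, pascal_sum t p' (q'+1), pascal_sum s q' (p'+1)]
    rw [mul_add, mul_add, mul_add, Finset.mul_sum, Finset.mul_sum, Finset.mul_sum, Finset.mul_sum]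
    rw [Finset.sum_congr rfl E1, Finset.sum_congr rfl E2, Finset.sum_congr rfl E3,
        Finset.sum_congr rfl E4]
    ring

open ENNReal in
lemma euler_ennreal (p q : ℕ) (x y : ℝ≥0∞) (hx0 : x ≠ 0) (hxt : x ≠ ∞)
    (hy0 : y ≠ 0) (hyt : y ≠ ∞) :
    (x^(p+1) * y^(q+1))⁻¹ =
      (∑ τ ∈ range (q+1), (Nat.choose (p+τ) τ : ℝ≥0∞) * ((x+y)^(p+1+τ) * y^(q+1-τ))⁻¹)
    + (∑ τ ∈ range (p+1), (Nat.choose (q+τ) τ : ℝ≥0∞) * ((x+y)^(q+1+τ) * x^(p+1-τ))⁻¹) := by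
  have hxy0 : x + y ≠ 0 := fun h => hx0 (by simpa using (add_eq_zero.mp h).1)
  have hxyt : x + y ≠ ∞ := ENNReal.add_ne_top.mpr ⟨hxt, hyt⟩
  have hL : (x^(p+1) * y^(q+1))⁻¹ ≠ ∞ := by
    rw [ENNReal.inv_ne_top]
    exact mul_ne_zero (pow_ne_zero _ hx0) (pow_ne_zero _ hy0)
  have hT1 : ∀ τ ∈ range (q+1), (Nat.choose (p+τ) τ : ℝ≥0∞) * ((x+y)^(p+1+τ) * y^(q+1-τ))⁻¹ ≠ ∞ := by
    intro τ _
    exact ENNReal.mul_ne_top (natCast_ne_top _)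
      (by rw [ENNReal.inv_ne_top]; exact mul_ne_zero (pow_ne_zero _ hxy0) (pow_ne_zero _ hy0))
  have hT2 : ∀ τ ∈ range (p+1), (Nat.choose (q+τ) τ : ℝ≥0∞) * ((x+y)^(q+1+τ) * x^(p+1-τ))⁻¹ ≠ ∞ := by
    intro τ _
    exact ENNReal.mul_ne_top (natCast_ne_top _)
      (by rw [ENNReal.inv_ne_top]; exact mul_ne_zero (pow_ne_zero _ hxy0) (pow_ne_zero _ hx0))
  have hR : (∑ τ ∈ range (q+1), (Nat.choose (p+τ) τ : ℝ≥0∞) * ((x+y)^(p+1+τ) * y^(q+1-τ))⁻¹)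
      + (∑ τ ∈ range (p+1), (Nat.choose (q+τ) τ : ℝ≥0∞) * ((x+y)^(q+1+τ) * x^(p+1-τ))⁻¹) ≠ ∞ := by
    apply ENNReal.add_ne_top.mpr
    constructor
    · exact (ENNReal.sum_lt_top.mpr (fun τ hτ => lt_top_iff_ne_top.mpr (hT1 τ hτ))).ne
    · exact (ENNReal.sum_lt_top.mpr (fun τ hτ => lt_top_iff_ne_top.mpr (hT2 τ hτ))).ne
  rw [← ENNReal.toReal_eq_toReal_iff' hL hR]
  rw [ENNReal.toReal_add (by exact (ENNReal.sum_lt_top.mpr (fun τ hτ => lt_top_iff_ne_top.mpr (hT1 τ hτ))).ne)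
        (by exact (ENNReal.sum_lt_top.mpr (fun τ hτ => lt_top_iff_ne_top.mpr (hT2 τ hτ))).ne),
      ENNReal.toReal_sum hT1, ENNReal.toReal_sum hT2]
  simp only [ENNReal.toReal_mul, ENNReal.toReal_pow, ENNReal.toReal_inv,
    ENNReal.toReal_add hxt hyt, ENNReal.toReal_natCast]
  have hx' : (0:ℝ) < x.toReal := ENNReal.toReal_pos hx0 hxt
  have hy' : (0:ℝ) < y.toReal := ENNReal.toReal_pos hy0 hyt
  have h := euler_real (p+q) p q rfl x.toReal y.toReal hx' hy'
  simp only [one_div, div_eq_mul_inv, one_mul] at h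
  exact h

open ENNReal

/-- ENNReal triple zeta -/
noncomputable def ZE (k₁ k₂ k₃ : ℕ) : ℝ≥0∞ :=
  ∑' (a : ℕ) (b : ℕ) (c : ℕ),
    (((a+b+c+3 : ℕ) : ℝ≥0∞)^k₁ * ((b+c+2 : ℕ) : ℝ≥0∞)^k₂ * ((c+1 : ℕ) : ℝ≥0∞)^k₃)⁻¹

lemma partial_tail (k : ℕ) (hk : 1 ≤ k) (N : ℕ) :
    ∑ i ∈ Finset.range N, (1 / ((k+1+i : ℕ) : ℝ)^2) ≤ 1 / (k : ℝ) := by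
  have hk' : (0:ℝ) < (k:ℝ) := by exact_mod_cast hk
  have h1 : ∀ i ∈ Finset.range N, (1 / ((k+1+i : ℕ) : ℝ)^2)
      ≤ 1/((k+i:ℕ):ℝ) - 1/((k+(i+1):ℕ):ℝ) := by
    intro i _
    have ha : (0:ℝ) < ((k+i:ℕ):ℝ) := by positivity
    have ha1 : (0:ℝ) < ((k+i:ℕ):ℝ) + 1 := by positivity
    have hcast : ((k+1+i : ℕ) : ℝ) = ((k+i:ℕ):ℝ) + 1 := by push_cast; ring
    have hcast2 : ((k+(i+1) : ℕ) : ℝ) = ((k+i:ℕ):ℝ) + 1 := by push_cast; ring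
    rw [hcast, hcast2]
    rw [div_sub_div _ _ (ne_of_gt ha) (ne_of_gt ha1)]
    have hnum : ((k+i:ℕ):ℝ) + 1 - ((k+i:ℕ):ℝ) * 1 = 1 := by ring
    rw [one_mul, mul_one]
    have : ((k+i:ℕ):ℝ) + 1 - ((k+i:ℕ):ℝ) = 1 := by ring
    rw [this]
    apply one_div_le_one_div_of_le (by positivity)
    nlinarith [ha]
  calc ∑ i ∈ Finset.range N, (1 / ((k+1+i : ℕ) : ℝ)^2)
      ≤ ∑ i ∈ Finset.range N, (1/((k+i:ℕ):ℝ) - 1/((k+(i+1):ℕ):ℝ)) := Finset.sum_le_sum h1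
    _ = 1/((k+0:ℕ):ℝ) - 1/((k+N:ℕ):ℝ) :=
        Finset.sum_range_sub' (fun i => 1/((k+i:ℕ):ℝ)) N
    _ ≤ 1/(k:ℝ) := by
        have : (0:ℝ) ≤ 1/((k+N:ℕ):ℝ) := by positivity
        simp only [Nat.add_zero]
        linarith

lemma tail_ennreal (k : ℕ) (hk : 1 ≤ k) :
    ∑' n : ℕ, (((k+1+n : ℕ) : ℝ≥0∞)^2)⁻¹ ≤ ((k : ℕ) : ℝ≥0∞)⁻¹ := by
  have hk' : (0:ℝ) < (k:ℝ) := by exact_mod_cast hk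
  apply ENNReal.tsum_le_of_sum_range_le
  intro N
  have hterm : ∀ i : ℕ, (((k+1+i : ℕ) : ℝ≥0∞)^2)⁻¹ = ENNReal.ofReal (1 / ((k+1+i : ℕ) : ℝ)^2) := by
    intro i
    have hpos : (0:ℝ) < ((k+1+i : ℕ) : ℝ)^2 := by positivity
    rw [one_div, ENNReal.ofReal_inv_of_pos hpos, ENNReal.ofReal_pow (by positivity),
      ENNReal.ofReal_natCast]
  calc ∑ i ∈ Finset.range N, (((k+1+i : ℕ) : ℝ≥0∞)^2)⁻¹
      = ∑ i ∈ Finset.range N, ENNReal.ofReal (1 / ((k+1+i : ℕ) : ℝ)^2) :=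
        Finset.sum_congr rfl (fun i _ => hterm i)
    _ = ENNReal.ofReal (∑ i ∈ Finset.range N, 1 / ((k+1+i : ℕ) : ℝ)^2) :=
        (ENNReal.ofReal_sum_of_nonneg (fun i _ => by positivity)).symm
    _ ≤ ENNReal.ofReal (1/(k:ℝ)) := ENNReal.ofReal_le_ofReal (partial_tail k hk N)
    _ = ((k : ℕ) : ℝ≥0∞)⁻¹ := by
        rw [one_div, ENNReal.ofReal_inv_of_pos hk', ENNReal.ofReal_natCast]

lemma split3 (x y : ℝ≥0∞) (hx0 : x ≠ 0) (hxt : x ≠ ∞) (hy0 : y ≠ 0) (hyt : y ≠ ∞) :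
    (x * y * (x+y))⁻¹ = ((x+y)^2 * y)⁻¹ + ((x+y)^2 * x)⁻¹ := by
  have hxy0 : x + y ≠ 0 := fun h => hx0 (by simpa using (add_eq_zero.mp h).1)
  have hxyt : x + y ≠ ∞ := ENNReal.add_ne_top.mpr ⟨hxt, hyt⟩
  have hL : (x * y * (x+y))⁻¹ ≠ ∞ := by
    rw [ENNReal.inv_ne_top]; exact mul_ne_zero (mul_ne_zero hx0 hy0) hxy0
  have h1 : ((x+y)^2 * y)⁻¹ ≠ ∞ := by
    rw [ENNReal.inv_ne_top]; exact mul_ne_zero (pow_ne_zero _ hxy0) hy0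
  have h2 : ((x+y)^2 * x)⁻¹ ≠ ∞ := by
    rw [ENNReal.inv_ne_top]; exact mul_ne_zero (pow_ne_zero _ hxy0) hx0
  rw [← ENNReal.toReal_eq_toReal_iff' hL (ENNReal.add_ne_top.mpr ⟨h1, h2⟩)]
  rw [ENNReal.toReal_add h1 h2]
  simp only [ENNReal.toReal_mul, ENNReal.toReal_pow, ENNReal.toReal_inv,
    ENNReal.toReal_add hxt hyt]
  have hx' : (0:ℝ) < x.toReal := ENNReal.toReal_pos hx0 hxt
  have hy' : (0:ℝ) < y.toReal := ENNReal.toReal_pos hy0 hyt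
  field_simp

set_option maxHeartbeats 2000000 in
lemma L_ne_top (r p q : ℕ) (hr : 2 ≤ r) (hp : 1 ≤ p) (hq : 1 ≤ q) :
    (∑' (l : ℕ) (m : ℕ) (n : ℕ),
      (((l+m+n+3 : ℕ) : ℝ≥0∞)^r * ((l+1 : ℕ) : ℝ≥0∞)^p * ((m+1 : ℕ) : ℝ≥0∞)^q)⁻¹) ≠ ∞ := by
  -- basic positivity facts
  have one_le_cast : ∀ k : ℕ, 1 ≤ k → (1:ℝ≥0∞) ≤ (k : ℝ≥0∞) := fun k hk => by
    exact_mod_cast Nat.one_le_cast.mpr hk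
  have cast_ne_zero : ∀ k : ℕ, 1 ≤ k → ((k : ℝ≥0∞)) ≠ 0 := fun k hk => by
    simp; omega
  -- termwise bound
  have hB : ∀ l m n : ℕ,
      (((l+m+n+3 : ℕ) : ℝ≥0∞)^r * ((l+1 : ℕ) : ℝ≥0∞)^p * ((m+1 : ℕ) : ℝ≥0∞)^q)⁻¹
      ≤ (((l+m+n+3 : ℕ) : ℝ≥0∞)^2 * ((l+1 : ℕ) : ℝ≥0∞) * ((m+1 : ℕ) : ℝ≥0∞))⁻¹ := by
    intro l m n
    apply ENNReal.inv_le_inv'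
    have h1 : ((l+m+n+3 : ℕ) : ℝ≥0∞)^2 ≤ ((l+m+n+3 : ℕ) : ℝ≥0∞)^r :=
      pow_le_pow_right' (one_le_cast _ (by omega)) hr
    have h2 : ((l+1 : ℕ) : ℝ≥0∞) ≤ ((l+1 : ℕ) : ℝ≥0∞)^p := by
      conv_lhs => rw [← pow_one ((l+1 : ℕ) : ℝ≥0∞)]
      exact pow_le_pow_right' (one_le_cast _ (by omega)) hp
    have h3 : ((m+1 : ℕ) : ℝ≥0∞) ≤ ((m+1 : ℕ) : ℝ≥0∞)^q := by
      conv_lhs => rw [← pow_one ((m+1 : ℕ) : ℝ≥0∞)]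
      exact pow_le_pow_right' (one_le_cast _ (by omega)) hq
    exact mul_le_mul' (mul_le_mul' h1 h2) h3
  -- the basic quadratic-sum bound S
  have hS : (∑' k : ℕ, ((k+1 : ℕ) : ℝ≥0∞)⁻¹ * ((k+1 : ℕ) : ℝ≥0∞)⁻¹) ≤ 2 := by
    rw [tsum_eq_zero_add' ENNReal.summable]
    have h0 : ((0+1 : ℕ) : ℝ≥0∞)⁻¹ * ((0+1 : ℕ) : ℝ≥0∞)⁻¹ = 1 := by norm_num
    rw [h0]
    have htail : (∑' k : ℕ, ((k+1+1 : ℕ) : ℝ≥0∞)⁻¹ * ((k+1+1 : ℕ) : ℝ≥0∞)⁻¹) ≤ 1 := by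
      have : ∀ k : ℕ, ((k+1+1 : ℕ) : ℝ≥0∞)⁻¹ * ((k+1+1 : ℕ) : ℝ≥0∞)⁻¹
          = (((1+1+k : ℕ) : ℝ≥0∞)^2)⁻¹ := by
        intro k
        rw [show (1+1+k : ℕ) = (k+1+1 : ℕ) from by omega, pow_two,
          ENNReal.mul_inv (Or.inl (cast_ne_zero _ (by omega))) (Or.inl (natCast_ne_top _))]
      rw [tsum_congr this]
      simpa using tail_ennreal 1 le_rfl
    calc 1 + (∑' k : ℕ, ((k+1+1 : ℕ) : ℝ≥0∞)⁻¹ * ((k+1+1 : ℕ) : ℝ≥0∞)⁻¹)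
        ≤ 1 + 1 := add_le_add_right htail 1
      _ = 2 := by norm_num
  -- inner sum over n
  have hInner : ∀ l m : ℕ,
      (∑' n : ℕ, (((l+m+n+3 : ℕ) : ℝ≥0∞)^2 * ((l+1 : ℕ) : ℝ≥0∞) * ((m+1 : ℕ) : ℝ≥0∞))⁻¹)
      ≤ (((l+m+2 : ℕ) : ℝ≥0∞)^2 * ((m+1 : ℕ) : ℝ≥0∞))⁻¹
        + (((l+m+2 : ℕ) : ℝ≥0∞)^2 * ((l+1 : ℕ) : ℝ≥0∞))⁻¹ := by
    intro l m
    have hu0 : ((l+1 : ℕ) : ℝ≥0∞) ≠ 0 := cast_ne_zero _ (by omega)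
    have hv0 : ((m+1 : ℕ) : ℝ≥0∞) ≠ 0 := cast_ne_zero _ (by omega)
    have hsplit : ∀ n : ℕ,
        (((l+m+n+3 : ℕ) : ℝ≥0∞)^2 * ((l+1 : ℕ) : ℝ≥0∞) * ((m+1 : ℕ) : ℝ≥0∞))⁻¹
        = (((l+1 : ℕ) : ℝ≥0∞) * ((m+1 : ℕ) : ℝ≥0∞))⁻¹ * ((((l+m+2)+1+n : ℕ) : ℝ≥0∞)^2)⁻¹ := by
      intro n
      rw [show (l+m+n+3 : ℕ) = ((l+m+2)+1+n : ℕ) from by omega]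
      rw [mul_assoc, ENNReal.mul_inv (Or.inr (ENNReal.mul_ne_top (natCast_ne_top _) (natCast_ne_top _)))
        (Or.inr (mul_ne_zero hu0 hv0)), mul_comm]
    rw [tsum_congr hsplit, ENNReal.tsum_mul_left]
    have := tail_ennreal (l+m+2) (by omega)
    calc (((l+1 : ℕ) : ℝ≥0∞) * ((m+1 : ℕ) : ℝ≥0∞))⁻¹ * ∑' n : ℕ, ((((l+m+2)+1+n : ℕ) : ℝ≥0∞)^2)⁻¹
        ≤ (((l+1 : ℕ) : ℝ≥0∞) * ((m+1 : ℕ) : ℝ≥0∞))⁻¹ * ((l+m+2 : ℕ) : ℝ≥0∞)⁻¹ :=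
          mul_le_mul_right this _
      _ = (((l+1 : ℕ) : ℝ≥0∞) * ((m+1 : ℕ) : ℝ≥0∞) * ((l+m+2 : ℕ) : ℝ≥0∞))⁻¹ := by
          rw [ENNReal.mul_inv (Or.inl (mul_ne_zero hu0 hv0))
            (Or.inl (ENNReal.mul_ne_top (natCast_ne_top _) (natCast_ne_top _)))]
      _ = (((l+m+2 : ℕ) : ℝ≥0∞)^2 * ((m+1 : ℕ) : ℝ≥0∞))⁻¹
          + (((l+m+2 : ℕ) : ℝ≥0∞)^2 * ((l+1 : ℕ) : ℝ≥0∞))⁻¹ := by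
          have hcast : ((l+1 : ℕ) : ℝ≥0∞) + ((m+1 : ℕ) : ℝ≥0∞) = ((l+m+2 : ℕ) : ℝ≥0∞) := by
            push_cast; ring
          rw [← hcast]
          exact split3 _ _ hu0 (natCast_ne_top _) hv0 (natCast_ne_top _)
  -- second piece double sum
  have hP2 : (∑' (l : ℕ) (m : ℕ), (((l+m+2 : ℕ) : ℝ≥0∞)^2 * ((l+1 : ℕ) : ℝ≥0∞))⁻¹) ≤ 2 := by
    have step : ∀ l : ℕ, (∑' m : ℕ, (((l+m+2 : ℕ) : ℝ≥0∞)^2 * ((l+1 : ℕ) : ℝ≥0∞))⁻¹)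
        ≤ ((l+1 : ℕ) : ℝ≥0∞)⁻¹ * ((l+1 : ℕ) : ℝ≥0∞)⁻¹ := by
      intro l
      have hu0 : ((l+1 : ℕ) : ℝ≥0∞) ≠ 0 := cast_ne_zero _ (by omega)
      have hre : ∀ m : ℕ, (((l+m+2 : ℕ) : ℝ≥0∞)^2 * ((l+1 : ℕ) : ℝ≥0∞))⁻¹
          = ((l+1 : ℕ) : ℝ≥0∞)⁻¹ * ((((l+1)+1+m : ℕ) : ℝ≥0∞)^2)⁻¹ := by
        intro m
        rw [show (l+m+2 : ℕ) = ((l+1)+1+m : ℕ) from by omega,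
          ENNReal.mul_inv (Or.inr (natCast_ne_top _)) (Or.inr hu0), mul_comm]
      rw [tsum_congr hre, ENNReal.tsum_mul_left]
      exact mul_le_mul_right (tail_ennreal (l+1) (by omega)) _
    calc (∑' (l : ℕ) (m : ℕ), (((l+m+2 : ℕ) : ℝ≥0∞)^2 * ((l+1 : ℕ) : ℝ≥0∞))⁻¹)
        ≤ ∑' l : ℕ, ((l+1 : ℕ) : ℝ≥0∞)⁻¹ * ((l+1 : ℕ) : ℝ≥0∞)⁻¹ := ENNReal.tsum_le_tsum step
      _ ≤ 2 := hS
  -- first piece double sum (swap l and m)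
  have hP1 : (∑' (l : ℕ) (m : ℕ), (((l+m+2 : ℕ) : ℝ≥0∞)^2 * ((m+1 : ℕ) : ℝ≥0∞))⁻¹) ≤ 2 := by
    rw [ENNReal.tsum_comm]
    calc (∑' (m : ℕ) (l : ℕ), (((l+m+2 : ℕ) : ℝ≥0∞)^2 * ((m+1 : ℕ) : ℝ≥0∞))⁻¹)
        = ∑' (m : ℕ) (l : ℕ), (((m+l+2 : ℕ) : ℝ≥0∞)^2 * ((m+1 : ℕ) : ℝ≥0∞))⁻¹ := by
          refine tsum_congr (fun m => tsum_congr (fun l => ?_))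
          rw [show (l+m+2 : ℕ) = (m+l+2 : ℕ) from by omega]
      _ ≤ 2 := hP2
  -- put everything together
  apply ne_top_of_le_ne_top (show (2:ℝ≥0∞) + 2 ≠ ∞ from by norm_num)
  calc (∑' (l : ℕ) (m : ℕ) (n : ℕ),
        (((l+m+n+3 : ℕ) : ℝ≥0∞)^r * ((l+1 : ℕ) : ℝ≥0∞)^p * ((m+1 : ℕ) : ℝ≥0∞)^q)⁻¹)
      ≤ ∑' (l : ℕ) (m : ℕ) (n : ℕ),
        (((l+m+n+3 : ℕ) : ℝ≥0∞)^2 * ((l+1 : ℕ) : ℝ≥0∞) * ((m+1 : ℕ) : ℝ≥0∞))⁻¹ :=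
        ENNReal.tsum_le_tsum (fun l => ENNReal.tsum_le_tsum (fun m =>
          ENNReal.tsum_le_tsum (fun n => hB l m n)))
    _ ≤ ∑' (l : ℕ) (m : ℕ), ((((l+m+2 : ℕ) : ℝ≥0∞)^2 * ((m+1 : ℕ) : ℝ≥0∞))⁻¹
          + (((l+m+2 : ℕ) : ℝ≥0∞)^2 * ((l+1 : ℕ) : ℝ≥0∞))⁻¹) :=
        ENNReal.tsum_le_tsum (fun l => ENNReal.tsum_le_tsum (fun m => hInner l m))
    _ = (∑' (l : ℕ) (m : ℕ), (((l+m+2 : ℕ) : ℝ≥0∞)^2 * ((m+1 : ℕ) : ℝ≥0∞))⁻¹)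
        + (∑' (l : ℕ) (m : ℕ), (((l+m+2 : ℕ) : ℝ≥0∞)^2 * ((l+1 : ℕ) : ℝ≥0∞))⁻¹) := by
        rw [← ENNReal.tsum_add]
        exact tsum_congr (fun l => ENNReal.tsum_add)
    _ ≤ 2 + 2 := add_le_add hP1 hP2

lemma main_ennreal (r p q : ℕ) (hp : 1 ≤ p) (hq : 1 ≤ q) :
    (∑' (l : ℕ) (m : ℕ) (n : ℕ),
      (((l+m+n+3 : ℕ) : ℝ≥0∞)^r * ((l+1 : ℕ) : ℝ≥0∞)^p * ((m+1 : ℕ) : ℝ≥0∞)^q)⁻¹)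
    = (∑ τ ∈ Finset.range q, ((p-1+τ).choose τ : ℝ≥0∞) * ZE r (p+τ) (q-τ))
    + (∑ τ ∈ Finset.range p, ((q-1+τ).choose τ : ℝ≥0∞) * ZE r (q+τ) (p-τ)) := by
  obtain ⟨p', rfl⟩ : ∃ p', p = p'+1 := ⟨p-1, by omega⟩
  obtain ⟨q', rfl⟩ : ∃ q', q = q'+1 := ⟨q-1, by omega⟩
  simp only [Nat.add_sub_cancel]
  have inv_split : ∀ a b : ℝ≥0∞, a ≠ 0 → a ≠ ∞ → (a * b)⁻¹ = a⁻¹ * b⁻¹ :=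
    fun a b ha0 hat => ENNReal.mul_inv (Or.inl ha0) (Or.inl hat)
  have cast_ne_zero : ∀ k : ℕ, 1 ≤ k → ((k : ℝ≥0∞)) ≠ 0 := fun k hk => by simp; omega
  -- pointwise Euler decomposition
  have point : ∀ l m n : ℕ,
      (((l+m+n+3 : ℕ) : ℝ≥0∞)^r * ((l+1 : ℕ) : ℝ≥0∞)^(p'+1) * ((m+1 : ℕ) : ℝ≥0∞)^(q'+1))⁻¹
      = (∑ τ ∈ Finset.range (q'+1), ((p'+τ).choose τ : ℝ≥0∞) *
          (((l+m+n+3 : ℕ) : ℝ≥0∞)^r * ((l+m+2 : ℕ) : ℝ≥0∞)^(p'+1+τ) * ((m+1 : ℕ) : ℝ≥0∞)^(q'+1-τ))⁻¹)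
      + (∑ τ ∈ Finset.range (p'+1), ((q'+τ).choose τ : ℝ≥0∞) *
          (((l+m+n+3 : ℕ) : ℝ≥0∞)^r * ((l+m+2 : ℕ) : ℝ≥0∞)^(q'+1+τ) * ((l+1 : ℕ) : ℝ≥0∞)^(p'+1-τ))⁻¹) := by
    intro l m n
    have hs0 : (((l+m+n+3 : ℕ) : ℝ≥0∞))^r ≠ 0 := pow_ne_zero _ (cast_ne_zero _ (by omega))
    have hst : (((l+m+n+3 : ℕ) : ℝ≥0∞))^r ≠ ∞ := ENNReal.pow_ne_top (natCast_ne_top _)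
    have hx0 : ((l+1 : ℕ) : ℝ≥0∞) ≠ 0 := cast_ne_zero _ (by omega)
    have hy0 : ((m+1 : ℕ) : ℝ≥0∞) ≠ 0 := cast_ne_zero _ (by omega)
    have hxy : ((l+1 : ℕ) : ℝ≥0∞) + ((m+1 : ℕ) : ℝ≥0∞) = ((l+m+2 : ℕ) : ℝ≥0∞) := by
      push_cast; ring
    rw [mul_assoc, inv_split _ _ hs0 hst,
      euler_ennreal p' q' _ _ hx0 (natCast_ne_top _) hy0 (natCast_ne_top _), hxy,
      mul_add, Finset.mul_sum, Finset.mul_sum]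
    congr 1
    · refine Finset.sum_congr rfl (fun τ _ => ?_)
      rw [mul_assoc (((l+m+n+3 : ℕ) : ℝ≥0∞)^r), inv_split _ _ hs0 hst]
      ring
    · refine Finset.sum_congr rfl (fun τ _ => ?_)
      rw [mul_assoc (((l+m+n+3 : ℕ) : ℝ≥0∞)^r), inv_split _ _ hs0 hst]
      ring
  rw [tsum_congr (fun l => tsum_congr (fun m => tsum_congr (fun n => point l m n)))]
  rw [tsum_congr (fun l => tsum_congr (fun m =>
        ENNReal.tsum_add (f := fun n => _) (g := fun n => _))),
      tsum_congr (fun l => ENNReal.tsum_add (f := fun m => _) (g := fun m => _)),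
      ENNReal.tsum_add (f := fun l => _) (g := fun l => _)]
  -- helper to pull finite sums and constants out of tsums
  have pull : ∀ (s : Finset ℕ) (c : ℕ → ℝ≥0∞) (F : ℕ → ℕ → ℝ≥0∞),
      (∑' i : ℕ, ∑ τ ∈ s, c τ * F τ i) = ∑ τ ∈ s, c τ * ∑' i, F τ i := by
    intro s c F
    rw [Summable.tsum_finsetSum (fun τ _ => ENNReal.summable)]
    exact Finset.sum_congr rfl (fun τ _ => ENNReal.tsum_mul_left)
  have swapA : ∀ (G : ℕ → ℕ → ℕ → ℝ≥0∞),
      (∑' (l : ℕ) (m : ℕ) (n : ℕ), G l m n) = ∑' (n : ℕ) (l : ℕ) (m : ℕ), G l m n := by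
    intro G
    calc (∑' (l : ℕ) (m : ℕ) (n : ℕ), G l m n)
        = ∑' (l : ℕ) (n : ℕ) (m : ℕ), G l m n := tsum_congr (fun l => ENNReal.tsum_comm)
      _ = ∑' (n : ℕ) (l : ℕ) (m : ℕ), G l m n := ENNReal.tsum_comm
  have swapB : ∀ (G : ℕ → ℕ → ℕ → ℝ≥0∞),
      (∑' (l : ℕ) (m : ℕ) (n : ℕ), G l m n) = ∑' (n : ℕ) (m : ℕ) (l : ℕ), G l m n := by
    intro G
    rw [swapA]
    exact tsum_congr (fun n => ENNReal.tsum_comm)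
  congr 1
  · -- first family
    rw [tsum_congr (fun l => tsum_congr (fun m => pull _ _ _)),
        tsum_congr (fun l => pull _ _ _), pull _ _ _]
    refine Finset.sum_congr rfl (fun τ _ => ?_)
    congr 1
    rw [swapA]
    unfold ZE
    refine tsum_congr (fun n => tsum_congr (fun l => tsum_congr (fun m => ?_)))
    rw [show (l+m+n+3 : ℕ) = (n+l+m+3 : ℕ) from by omega]
  · -- second family
    rw [tsum_congr (fun l => tsum_congr (fun m => pull _ _ _)),
        tsum_congr (fun l => pull _ _ _), pull _ _ _]
    refine Finset.sum_congr rfl (fun τ _ => ?_)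
    congr 1
    rw [swapB]
    unfold ZE
    refine tsum_congr (fun n => tsum_congr (fun m => tsum_congr (fun l => ?_)))
    rw [show (l+m+n+3 : ℕ) = (n+m+l+3 : ℕ) from by omega,
        show (l+m+2 : ℕ) = (m+l+2 : ℕ) from by omega]

lemma tsum3_toReal (F : ℕ → ℕ → ℕ → ℝ≥0∞) (h : (∑' (a : ℕ) (b : ℕ) (c : ℕ), F a b c) ≠ ∞) :
    (∑' (a : ℕ) (b : ℕ) (c : ℕ), F a b c).toReal
    = ∑' (a : ℕ) (b : ℕ) (c : ℕ), (F a b c).toReal := by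
  have h2 : ∀ a, (∑' (b : ℕ) (c : ℕ), F a b c) ≠ ∞ :=
    fun a => ne_top_of_le_ne_top h (ENNReal.le_tsum a)
  have h3 : ∀ a b, (∑' (c : ℕ), F a b c) ≠ ∞ :=
    fun a b => ne_top_of_le_ne_top (h2 a) (ENNReal.le_tsum b)
  have h4 : ∀ a b c, F a b c ≠ ∞ :=
    fun a b c => ne_top_of_le_ne_top (h3 a b) (ENNReal.le_tsum c)
  rw [ENNReal.tsum_toReal_eq h2]
  refine tsum_congr fun a => ?_
  rw [ENNReal.tsum_toReal_eq (h3 a)]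
  exact tsum_congr fun b => ENNReal.tsum_toReal_eq (h4 a b)

lemma zeta3_eq (k₁ k₂ k₃ : ℕ) (h : ZE k₁ k₂ k₃ ≠ ∞) :
    zeta3 k₁ k₂ k₃ = (ZE k₁ k₂ k₃).toReal := by
  unfold zeta3 ZE
  unfold ZE at h
  rw [tsum3_toReal _ h]
  refine tsum_congr fun a => tsum_congr fun b => tsum_congr fun c => ?_
  simp only [ENNReal.toReal_inv, ENNReal.toReal_mul, ENNReal.toReal_pow, ENNReal.toReal_natCast,
    one_div]
  congr 1
  push_cast
  ring

theorem A3_value_as_triple_zeta (r p q : ℕ) (hr : 2 ≤ r) (hp : 1 ≤ p) (hq : 1 ≤ q) :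
    (∑' (l : ℕ) (m : ℕ) (n : ℕ),
      1 / (((l : ℝ) + (m : ℝ) + (n : ℝ) + 3) ^ r * ((l : ℝ) + 1) ^ p * ((m : ℝ) + 1) ^ q)) =
      (∑ τ ∈ Finset.range q, (Nat.choose (p - 1 + τ) τ : ℝ) * zeta3 r (p + τ) (q - τ)) +
      (∑ τ ∈ Finset.range p, (Nat.choose (q - 1 + τ) τ : ℝ) * zeta3 r (q + τ) (p - τ)) := by
  have hL := L_ne_top r p q hr hp hq
  have hmain := main_ennreal r p q hp hq
  have hsum1_ne : (∑ τ ∈ Finset.range q, ((p-1+τ).choose τ : ℝ≥0∞) * ZE r (p+τ) (q-τ)) ≠ ∞ := by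
    refine ne_top_of_le_ne_top hL ?_
    rw [hmain]; exact le_self_add
  have hsum2_ne : (∑ τ ∈ Finset.range p, ((q-1+τ).choose τ : ℝ≥0∞) * ZE r (q+τ) (p-τ)) ≠ ∞ := by
    refine ne_top_of_le_ne_top hL ?_
    rw [hmain]; exact le_add_self
  have hZ1 : ∀ τ ∈ Finset.range q, ZE r (p+τ) (q-τ) ≠ ∞ := by
    intro τ hτ
    have h1 : ((p-1+τ).choose τ : ℝ≥0∞) * ZE r (p+τ) (q-τ) ≠ ∞ :=
      ne_top_of_le_ne_top hsum1_ne (Finset.single_le_sum (f := fun τ => ((p-1+τ).choose τ : ℝ≥0∞) * ZE r (p+τ) (q-τ)) (fun i _ => zero_le) hτ)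
    have hC : ((p-1+τ).choose τ : ℝ≥0∞) ≠ 0 :=
      Nat.cast_ne_zero.mpr (Nat.choose_pos (by omega)).ne'
    exact fun h => h1 (by rw [h, ENNReal.mul_top hC])
  have hZ2 : ∀ τ ∈ Finset.range p, ZE r (q+τ) (p-τ) ≠ ∞ := by
    intro τ hτ
    have h1 : ((q-1+τ).choose τ : ℝ≥0∞) * ZE r (q+τ) (p-τ) ≠ ∞ :=
      ne_top_of_le_ne_top hsum2_ne (Finset.single_le_sum (f := fun τ => ((q-1+τ).choose τ : ℝ≥0∞) * ZE r (q+τ) (p-τ)) (fun i _ => zero_le) hτ)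
    have hC : ((q-1+τ).choose τ : ℝ≥0∞) ≠ 0 :=
      Nat.cast_ne_zero.mpr (Nat.choose_pos (by omega)).ne'
    exact fun h => h1 (by rw [h, ENNReal.mul_top hC])
  have LHS_eq : (∑' (l : ℕ) (m : ℕ) (n : ℕ),
      1 / (((l : ℝ) + (m : ℝ) + (n : ℝ) + 3) ^ r * ((l : ℝ) + 1) ^ p * ((m : ℝ) + 1) ^ q))
      = (∑' (l : ℕ) (m : ℕ) (n : ℕ),
        (((l+m+n+3 : ℕ) : ℝ≥0∞)^r * ((l+1 : ℕ) : ℝ≥0∞)^p * ((m+1 : ℕ) : ℝ≥0∞)^q)⁻¹).toReal := by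
    rw [tsum3_toReal _ hL]
    refine tsum_congr fun l => tsum_congr fun m => tsum_congr fun n => ?_
    simp only [ENNReal.toReal_inv, ENNReal.toReal_mul, ENNReal.toReal_pow, ENNReal.toReal_natCast,
      one_div]
    congr 1
    push_cast
    ring
  rw [LHS_eq, hmain, ENNReal.toReal_add hsum1_ne hsum2_ne,
    ENNReal.toReal_sum (fun τ hτ => ENNReal.mul_ne_top (natCast_ne_top _) (hZ1 τ hτ)),
    ENNReal.toReal_sum (fun τ hτ => ENNReal.mul_ne_top (natCast_ne_top _) (hZ2 τ hτ))]
  congr 1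
  · refine Finset.sum_congr rfl (fun τ hτ => ?_)
    rw [ENNReal.toReal_mul, ENNReal.toReal_natCast, zeta3_eq _ _ _ (hZ1 τ hτ)]
  · refine Finset.sum_congr rfl (fun τ hτ => ?_)
    rw [ENNReal.toReal_mul, ENNReal.toReal_natCast, zeta3_eq _ _ _ (hZ2 τ hτ)]
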